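/- (Exactness of the online DMD update.) Let X_k, Y_k be real n×k matrices with rank X_k = n, and define the DMD matrix A_k = Y_k X_kᵀ (X_k X_kᵀ)⁻¹ and P_k = (X_k X_kᵀ)⁻¹. Given a new snapshot pair x_{k+1}, y_{k+1} ∈ ℝⁿ, let X_{k+1} = [X_k x_{k+1}], Y_{k+1} = [Y_k y_{k+1}], and γ_{k+1} = 1/(1 + x_{k+1}ᵀ P_k x_{k+1}). Then X_{k+1} X_{k+1}ᵀ is invertible and A_k + γ_{k+1} (y_{k+1} − A_k x_{k+1}) x_{k+1}ᵀ P_k = Y_{k+1} X_{k+1}ᵀ (X_{k+1} X_{k+1}ᵀ)⁻¹; that is, the rank-1 online update produces exactly the DMD matrix A_{k+1} for the extended data. -/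

import Mathlib

open Matrix

/-- The `n × (k+1)` matrix obtained by appending the vector `x` as a final column of `X`. -/
def appendCol {n k : ℕ} (X : Matrix (Fin n) (Fin k) ℝ) (x : Fin n → ℝ) :
    Matrix (Fin n) (Fin (k + 1)) ℝ :=
  Matrix.of fun i j => (Fin.snoc (fun j' => X i j') (x i) : Fin (k + 1) → ℝ) j

lemma appendCol_mul_transpose {n k : ℕ} (X Y : Matrix (Fin n) (Fin k) ℝ)
    (x y : Fin n → ℝ) :
    appendCol Y y * (appendCol X x)ᵀ = Y * Xᵀ + vecMulVec y x := by
  ext i j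
  simp [appendCol, Matrix.mul_apply, Fin.sum_univ_castSucc, vecMulVec_apply]

lemma mul_vecMulVec' {m p q : Type*} [Fintype p] (M : Matrix m p ℝ) (u : p → ℝ)
    (v : q → ℝ) : M * vecMulVec u v = vecMulVec (M.mulVec u) v := by
  ext i j
  simp [Matrix.mul_apply, vecMulVec_apply, Matrix.mulVec, dotProduct,
    Finset.sum_mul, mul_assoc]

lemma vecMulVec_mul_vecMulVec' {a b c : Type*} [Fintype b] (u : a → ℝ) (v w : b → ℝ)
    (z : c → ℝ) : vecMulVec u v * vecMulVec w z = (v ⬝ᵥ w) • vecMulVec u z := by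
  ext i j
  simp only [Matrix.mul_apply, vecMulVec_apply, Matrix.smul_apply, dotProduct,
    Finset.sum_mul, smul_eq_mul, Finset.mul_sum]
  exact Finset.sum_congr rfl fun _ _ => by ring

lemma add_vecMulVec' {a b : Type*} (u v : a → ℝ) (w : b → ℝ) :
    vecMulVec u w + vecMulVec v w = vecMulVec (u + v) w := by
  ext i j
  simp [vecMulVec_apply, add_mul]

/-- Exactness of the online DMD update: the rank-1 update of
`A_k = Y_k X_kᵀ (X_k X_kᵀ)⁻¹` produces exactly the DMD matrix of the extended
data matrices `X_{k+1} = [X_k x]`, `Y_{k+1} = [Y_k y]`. -/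
theorem online_dmd_update_exact (n k : ℕ) (X Y : Matrix (Fin n) (Fin k) ℝ)
    (hX : X.rank = n) (x y : Fin n → ℝ) :
    IsUnit (appendCol X x * (appendCol X x)ᵀ) ∧
    Y * Xᵀ * (X * Xᵀ)⁻¹ +
        (1 / (1 + x ⬝ᵥ ((X * Xᵀ)⁻¹).mulVec x)) •
          (vecMulVec (y - (Y * Xᵀ * (X * Xᵀ)⁻¹).mulVec x) x * (X * Xᵀ)⁻¹) =
      appendCol Y y * (appendCol X x)ᵀ * (appendCol X x * (appendCol X x)ᵀ)⁻¹ := by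
  set B : Matrix (Fin n) (Fin n) ℝ := X * Xᵀ with hB
  -- B is invertible
  have hBrank : B.rank = n := by rw [hB, Matrix.rank_self_mul_transpose, hX]
  have hBu : IsUnit B := by
    rw [← Matrix.mulVec_surjective_iff_isUnit]
    have hrange : LinearMap.range B.mulVecLin = ⊤ :=
      Submodule.eq_top_of_finrank_eq (by
        rw [← Matrix.rank, hBrank, Module.finrank_pi, Fintype.card_fin])
    intro v
    obtain ⟨w, hw⟩ := LinearMap.range_eq_top.mp hrange v
    exact ⟨w, hw⟩
  -- B is positive semidefinite, hence positive definite
  have hBpsd : B.PosSemidef := by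
    have := Matrix.posSemidef_self_mul_conjTranspose X
    simpa [hB, Matrix.conjTranspose_eq_transpose_of_trivial] using this
  have hBinj : Function.Injective B.mulVec :=
    (Matrix.mulVec_injective_iff_isUnit).mpr hBu
  have hBpd : B.PosDef := by
    refine .of_dotProduct_mulVec_pos hBpsd.1 fun v hv => ?_
    refine lt_of_le_of_ne (hBpsd.dotProduct_mulVec_nonneg v) (Ne.symm fun h => hv ?_)
    have h0 : B.mulVec v = 0 := (hBpsd.dotProduct_mulVec_zero_iff v).mp h
    have hv0 : B.mulVec v = B.mulVec 0 := by rw [h0, Matrix.mulVec_zero]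
    exact hBinj hv0
  set P : Matrix (Fin n) (Fin n) ℝ := B⁻¹ with hP
  have hPpd : P.PosDef := hBpd.inv
  set d : ℝ := x ⬝ᵥ P.mulVec x with hd
  have hdnn : 0 ≤ d := by simpa using hPpd.posSemidef.dotProduct_mulVec_nonneg x
  have hc : (1 : ℝ) + d ≠ 0 := by positivity
  -- the extended Gram matrix
  have hC : appendCol X x * (appendCol X x)ᵀ = B + vecMulVec x x :=
    appendCol_mul_transpose X X x x
  have hxxpsd : (vecMulVec x x).PosSemidef := by
    have := Matrix.posSemidef_self_mul_conjTranspose (Matrix.replicateCol (Fin 1) x)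
    have hcr : Matrix.replicateCol (Fin 1) x * (Matrix.replicateCol (Fin 1) x)ᴴ = vecMulVec x x := by
      ext i j
      simp [Matrix.mul_apply, Matrix.replicateCol, vecMulVec_apply, Matrix.conjTranspose]
    rwa [hcr] at this
  have hCpd : (B + vecMulVec x x).PosDef := hBpd.add_posSemidef hxxpsd
  have hCu : IsUnit (appendCol X x * (appendCol X x)ᵀ) := by rw [hC]; exact hCpd.isUnit
  refine ⟨hCu, ?_⟩
  -- Now the Sherman–Morrison computation
  have hPB : P * B = 1 := Matrix.nonsing_inv_mul B ((Matrix.isUnit_iff_isUnit_det B).mp hBu)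
  have hY : appendCol Y y * (appendCol X x)ᵀ = Y * Xᵀ + vecMulVec y x :=
    appendCol_mul_transpose X Y x y
  set A : Matrix (Fin n) (Fin n) ℝ := Y * Xᵀ * P with hA
  set r : Fin n → ℝ := y - A.mulVec x with hr
  have hinv : Invertible (B + vecMulVec x x) := hCpd.isUnit.nonempty_invertible.some
  rw [hC, hY]
  symm
  rw [Matrix.mul_inv_eq_iff_eq_mul_of_invertible]
  -- goal : Y * Xᵀ + vecMulVec y x = (A + γ • (vecMulVec r x * P)) * (B + vecMulVec x x)
  have expand :
      (A + (1 / (1 + d)) • (vecMulVec r x * P)) * (B + vecMulVec x x) =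
        Y * Xᵀ + vecMulVec y x := by
    rw [add_mul, mul_add, mul_add, Matrix.smul_mul, Matrix.smul_mul]
    have h1 : A * B = Y * Xᵀ := by
      rw [hA, Matrix.mul_assoc (Y * Xᵀ) P B, hPB, Matrix.mul_one]
    have h2 : A * vecMulVec x x = vecMulVec (A.mulVec x) x := mul_vecMulVec' A x x
    have h3 : vecMulVec r x * P * B = vecMulVec r x := by
      rw [Matrix.mul_assoc, hPB, Matrix.mul_one]
    have h4 : vecMulVec r x * P * vecMulVec x x = d • vecMulVec r x := by
      rw [Matrix.mul_assoc, mul_vecMulVec' P x x, vecMulVec_mul_vecMulVec', hd]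
    rw [h1, h2, h3, h4, smul_smul]
    have h5 : (1 / (1 + d)) • vecMulVec r x + (1 / (1 + d) * d) • vecMulVec r x =
        vecMulVec r x := by
      rw [← add_smul]
      have : 1 / (1 + d) + 1 / (1 + d) * d = 1 := by field_simp
      rw [this, one_smul]
    have h6 : vecMulVec (A.mulVec x) x + vecMulVec r x = vecMulVec y x := by
      rw [add_vecMulVec', hr]
      funext i
      simp
    calc Y * Xᵀ + vecMulVec (A.mulVec x) x +
          ((1 / (1 + d)) • vecMulVec r x + (1 / (1 + d) * d) • vecMulVec r x)
        = Y * Xᵀ + vecMulVec (A.mulVec x) x + vecMulVec r x := by rw [h5]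
      _ = Y * Xᵀ + vecMulVec y x := by rw [add_assoc, h6]
    -- need to match associativity of additions
  calc Y * Xᵀ + vecMulVec y x
      = (A + (1 / (1 + d)) • (vecMulVec r x * P)) * (B + vecMulVec x x) := expand.symm
    _ = _ := by rw [hA, hP, hr, hd, hP, hA, hP, hB]
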